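/- Let d_1 ≥ ... ≥ d_n > 0 and D_i(α) = Σ_{j=1}^i d_j^α. Then for every index i and every α > 0, the absolute value of the derivative of α ↦ D_i(α)/D_n(α) is at most ln(d_1/d_n). -/

import Mathlib

open Finset Real

/-- The absolute value of the derivative of `α ↦ D_i(α)/D_n(α)` is at most
`ln(d_1/d_n)` (0-indexed: `ln (d 0 / d (n-1))`). -/
theorem stmt4 (n : ℕ) (hn : 0 < n) (d : ℕ → ℝ)
    (hpos : ∀ j, j < n → 0 < d j)
    (hsorted : ∀ j k, j ≤ k → k < n → d k ≤ d j)
    (i : ℕ) (hi : i ≤ n) (α : ℝ) (hα : 0 < α) :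
    |deriv (fun β : ℝ =>
        (∑ j ∈ Finset.range i, d j ^ β) / (∑ j ∈ Finset.range n, d j ^ β)) α|
      ≤ Real.log (d 0 / d (n - 1)) := by
  have hd0 : 0 < d 0 := hpos 0 hn
  have hn1 : n - 1 < n := Nat.sub_lt hn one_pos
  have hdn : 0 < d (n - 1) := hpos _ hn1
  set w : ℕ → ℝ := fun j => d j ^ α with hw
  set L : ℕ → ℝ := fun j => Real.log (d j) with hL
  set A : ℝ := ∑ j ∈ Finset.range i, w j with hA
  set B : ℝ := ∑ j ∈ Finset.range n, w j with hB
  set A' : ℝ := ∑ j ∈ Finset.range i, w j * L j with hA'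
  set B' : ℝ := ∑ j ∈ Finset.range n, w j * L j with hB'
  have hwpos : ∀ j, j < n → 0 < w j := fun j hj =>
    Real.rpow_pos_of_pos (hpos j hj) α
  have hBpos : 0 < B := Finset.sum_pos
    (fun j hj => hwpos j (Finset.mem_range.mp hj))
    (Finset.nonempty_range_iff.mpr hn.ne')
  have hAder : HasDerivAt (fun β : ℝ => ∑ j ∈ Finset.range i, d j ^ β) A' α := by
    apply HasDerivAt.fun_sum
    intro j hj
    simpa using (Real.hasStrictDerivAt_const_rpow
      (hpos j (lt_of_lt_of_le (Finset.mem_range.mp hj) hi)) α).hasDerivAt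
  have hBder : HasDerivAt (fun β : ℝ => ∑ j ∈ Finset.range n, d j ^ β) B' α := by
    apply HasDerivAt.fun_sum
    intro j hj
    simpa using (Real.hasStrictDerivAt_const_rpow
      (hpos j (Finset.mem_range.mp hj)) α).hasDerivAt
  have hder := hAder.fun_div hBder hBpos.ne'
  rw [hder.deriv]
  set s := Finset.range i
  set t := Finset.range n
  have hsub : s ⊆ t := Finset.range_subset_range.mpr hi
  set R : ℝ := ∑ j ∈ t \ s, w j with hR
  set R' : ℝ := ∑ j ∈ t \ s, w j * L j with hR'
  have hBsplit : B = R + A := by rw [hB, hR, hA, Finset.sum_sdiff hsub]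
  have hB'split : B' = R' + A' := by rw [hB', hR', hA', Finset.sum_sdiff hsub]
  have hNum : A' * B - A * B' =
      ∑ x ∈ s, ∑ y ∈ t \ s, w x * w y * (L x - L y) := by
    have h1 : A' * R = ∑ x ∈ s, ∑ y ∈ t \ s, (w x * L x) * w y :=
      Finset.sum_mul_sum _ _ _ _
    have h2 : A * R' = ∑ x ∈ s, ∑ y ∈ t \ s, w x * (w y * L y) :=
      Finset.sum_mul_sum _ _ _ _
    rw [hBsplit, hB'split]
    have : A' * (R + A) - A * (R' + A') = A' * R - A * R' := by ring
    rw [this, h1, h2, ← Finset.sum_sub_distrib]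
    apply Finset.sum_congr rfl
    intro x _
    rw [← Finset.sum_sub_distrib]
    apply Finset.sum_congr rfl
    intro y _
    ring
  set C : ℝ := Real.log (d 0 / d (n - 1)) with hC
  have hClog : C = L 0 - L (n - 1) := Real.log_div hd0.ne' hdn.ne'
  have hCnonneg : 0 ≤ C :=
    Real.log_nonneg ((one_le_div hdn).mpr (hsorted 0 (n - 1) (Nat.zero_le _) hn1))
  -- bounds on terms
  have hterm : ∀ x ∈ s, ∀ y ∈ t \ s,
      0 ≤ w x * w y * (L x - L y) ∧ w x * w y * (L x - L y) ≤ w x * w y * C := by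
    intro x hx y hy
    obtain ⟨hyt, hys⟩ := Finset.mem_sdiff.mp hy
    have hxi : x < i := Finset.mem_range.mp hx
    have hyn : y < n := Finset.mem_range.mp hyt
    have hiy : i ≤ y := Nat.le_of_not_lt (fun h => hys (Finset.mem_range.mpr h))
    have hxy : x ≤ y := le_of_lt (lt_of_lt_of_le hxi hiy)
    have hxn : x < n := lt_of_le_of_lt hxy hyn
    have hdy : 0 < d y := hpos y hyn
    have hLxy : L y ≤ L x := Real.log_le_log hdy (hsorted x y hxy hyn)
    have hLx0 : L x ≤ L 0 := Real.log_le_log (hpos x hxn) (hsorted 0 x (Nat.zero_le _) hxn)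
    have hLyn : L (n - 1) ≤ L y := Real.log_le_log hdn
      (hsorted y (n - 1) (Nat.le_sub_one_of_lt hyn) hn1)
    have hwprod : 0 ≤ w x * w y := le_of_lt (mul_pos (hwpos x hxn) (hwpos y hyn))
    constructor
    · exact mul_nonneg hwprod (sub_nonneg.mpr hLxy)
    · apply mul_le_mul_of_nonneg_left _ hwprod
      rw [hClog]; exact sub_le_sub hLx0 hLyn
  have hNumNonneg : 0 ≤ A' * B - A * B' := by
    rw [hNum]
    exact Finset.sum_nonneg fun x hx => Finset.sum_nonneg fun y hy => (hterm x hx y hy).1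
  have hwnn : ∀ j ∈ t, 0 ≤ w j := fun j hj => (hwpos j (Finset.mem_range.mp hj)).le
  have hAB : A ≤ B := Finset.sum_le_sum_of_subset_of_nonneg hsub fun j hj _ => hwnn j hj
  have hRB : R ≤ B := Finset.sum_le_sum_of_subset_of_nonneg (Finset.sdiff_subset)
    fun j hj _ => hwnn j hj
  have hAnn : 0 ≤ A := Finset.sum_nonneg fun j hj => hwnn j (hsub hj)
  have hRnn : 0 ≤ R := Finset.sum_nonneg fun j hj => hwnn j (Finset.sdiff_subset hj)
  have hNumLe : A' * B - A * B' ≤ C * B ^ 2 := by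
    calc A' * B - A * B' ≤ ∑ x ∈ s, ∑ y ∈ t \ s, w x * w y * C := by
          rw [hNum]
          exact Finset.sum_le_sum fun x hx => Finset.sum_le_sum fun y hy =>
            (hterm x hx y hy).2
      _ = A * R * C := by
          rw [hA, hR, Finset.sum_mul_sum, Finset.sum_mul]
          exact Finset.sum_congr rfl fun x _ => by rw [Finset.sum_mul]
      _ ≤ B * B * C := by
          apply mul_le_mul_of_nonneg_right _ hCnonneg
          exact mul_le_mul hAB hRB hRnn hBpos.le
      _ = C * B ^ 2 := by ring
  show |(A' * B - A * B') / B ^ 2| ≤ C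
  rw [abs_div, abs_of_nonneg hNumNonneg, abs_of_nonneg (by positivity : (0:ℝ) ≤ B ^ 2)]
  rw [div_le_iff₀ (by positivity)]
  exact hNumLe
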